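/- Let G be an m×n matrix with entries in {0,1}, and let Q_s ⊆ {0,1}^n be a downward-closed set of binary support vectors (i.e., if s ∈ Q_s and the support of t is contained in the support of s, then t ∈ Q_s; in particular the zero vector is in Q_s). Suppose the F₂-linear encoding map x ↦ G·x (arithmetic modulo 2) is injective on Q_s. Then, viewing the entries of G as the complex scalars 0 and 1, for all complex vectors q₁, q₂ ∈ ℂ^n whose support vectors belong to Q_s, one has q₁ ≠ q₂ if and only if G·q₁ ≠ G·q₂ (with the matrix-vector product taken over ℂ). -/

import Mathlib

lemma zmod2_cases : ∀ a : ZMod 2, ((if a = 0 then (0:ℤ) else 1) : ZMod 2) = a := by decide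
lemma zmod2_add_self : ∀ a : ZMod 2, a + a = 0 := by decide
lemma zmod2_ne_zero : ∀ a : ZMod 2, a ≠ 0 → a = 1 := by decide
lemma zmod2_add_eq_zero : ∀ a b : ZMod 2, a + b = 0 → a = b := by decide

lemma keyLemma {M N : Type*} [Fintype M] [Fintype N] [DecidableEq M] [DecidableEq N]
    (A : Matrix M N ℤ)
    (h : Function.Injective fun x : N → ZMod 2 => (A.map (Int.cast : ℤ → ZMod 2)).mulVec x) :
    Function.Injective fun x : N → ℂ => (A.map (Int.cast : ℤ → ℂ)).mulVec x := by
  haveI : Fact (Nat.Prime 2) := ⟨by norm_num⟩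
  set A₂ := A.map (Int.cast : ℤ → ZMod 2) with hA₂
  have hker : LinearMap.ker (Matrix.toLin' A₂) = ⊥ := by
    rw [LinearMap.ker_eq_bot]
    intro x y hxy
    exact h (by simpa [Matrix.toLin'_apply] using hxy)
  obtain ⟨g, hg⟩ := LinearMap.exists_leftInverse_of_injective _ hker
  set B := LinearMap.toMatrix' g with hB
  have hBA : B * A₂ = 1 := by
    have := congrArg LinearMap.toMatrix' hg
    rwa [LinearMap.toMatrix'_comp, LinearMap.toMatrix'_toLin', LinearMap.toMatrix'_id] at this
  -- integer lift of B
  set Bz : Matrix N M ℤ := fun i j => if B i j = 0 then 0 else 1 with hBz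
  have hBzmap : Bz.map (Int.cast : ℤ → ZMod 2) = B := by
    ext i j
    simp only [Matrix.map_apply]
    simp only [hBz]
    rw [apply_ite (Int.cast : ℤ → ZMod 2)]
    exact zmod2_cases (B i j)
  have hmul2 : ((Bz * A).map (Int.cast : ℤ → ZMod 2)) = 1 := by
    rw [show ((Int.cast : ℤ → ZMod 2)) = ⇑(Int.castRingHom (ZMod 2)) from rfl, Matrix.map_mul]
    rw [show ⇑(Int.castRingHom (ZMod 2)) = ((Int.cast : ℤ → ZMod 2)) from rfl, hBzmap, ← hA₂, hBA]
  have hdet2 : (((Bz * A).det : ℤ) : ZMod 2) = 1 := by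
    rw [show (((Bz * A).det : ℤ) : ZMod 2) = (Int.castRingHom (ZMod 2)) (Bz*A).det from rfl,
      RingHom.map_det]
    rw [show (Int.castRingHom (ZMod 2)).mapMatrix (Bz * A) = (Bz * A).map (Int.cast : ℤ → ZMod 2) from rfl]
    rw [hmul2, Matrix.det_one]
  have hdetz : (Bz * A).det ≠ 0 := by
    intro hc; rw [hc] at hdet2; simp at hdet2
  -- over ℂ
  set C := (Bz * A).map (Int.cast : ℤ → ℂ) with hC
  have hdetC : IsUnit C.det := by
    rw [hC, show (Bz * A).map (Int.cast : ℤ → ℂ) = (Int.castRingHom ℂ).mapMatrix (Bz * A) from rfl,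
      ← RingHom.map_det]
    simpa using hdetz
  intro x y hxy
  simp only at hxy
  have hCxy : C.mulVec x = C.mulVec y := by
    rw [hC, show (Bz * A).map (Int.cast : ℤ → ℂ) = Bz.map (Int.cast : ℤ → ℂ) * A.map (Int.cast : ℤ → ℂ) from
      Matrix.map_mul (f := Int.castRingHom ℂ), ← Matrix.mulVec_mulVec, ← Matrix.mulVec_mulVec, hxy]
  have := congrArg (C⁻¹.mulVec) hCxy
  rwa [Matrix.mulVec_mulVec, Matrix.mulVec_mulVec, Matrix.nonsing_inv_mul C hdetC,
    Matrix.one_mulVec, Matrix.one_mulVec] at this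

noncomputable def liftC (a : ZMod 2) : ℂ := if a = 0 then 0 else 1

noncomputable def suppVec {n : ℕ} (q : Fin n → ℂ) : Fin n → ZMod 2 :=
  fun i => if q i = 0 then 0 else 1

theorem stmt0 {m n : ℕ} (G : Matrix (Fin m) (Fin n) (ZMod 2))
    (Qs : Set (Fin n → ZMod 2))
    (hzero : (0 : Fin n → ZMod 2) ∈ Qs)
    (hdown : ∀ s ∈ Qs, ∀ t : Fin n → ZMod 2,
      {i | t i ≠ 0} ⊆ {i | s i ≠ 0} → t ∈ Qs)
    (hinj : ∀ s₁ ∈ Qs, ∀ s₂ ∈ Qs, G.mulVec s₁ = G.mulVec s₂ → s₁ = s₂)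
    (q₁ q₂ : Fin n → ℂ) (hq₁ : suppVec q₁ ∈ Qs) (hq₂ : suppVec q₂ ∈ Qs) :
    q₁ ≠ q₂ ↔ (G.map liftC).mulVec q₁ ≠ (G.map liftC).mulVec q₂ := by
  classical
  rw [not_iff_not.symm, not_not, not_not]
  constructor
  · rintro rfl; rfl
  intro hMeas
  set P : Fin n → Prop := fun i => q₁ i ≠ 0 ∨ q₂ i ≠ 0 with hP
  set Az : Matrix (Fin m ⊕ Fin n) (Fin n) ℤ := fun r j =>
    match r with
    | Sum.inl r => if P j then (if G r j = 0 then 0 else 1) else 0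
    | Sum.inr i => if i = j ∧ ¬ P j then 1 else 0 with hAz
  -- F₂ injectivity of Az
  have hinj2 : Function.Injective
      fun x : Fin n → ZMod 2 => (Az.map (Int.cast : ℤ → ZMod 2)).mulVec x := by
    intro x y hxy
    simp only at hxy
    set x' : Fin n → ZMod 2 := fun j => if P j then x j else 0 with hx'
    set y' : Fin n → ZMod 2 := fun j => if P j then y j else 0 with hy'
    have rowl : ∀ (z : Fin n → ZMod 2) r,
        (Az.map (Int.cast : ℤ → ZMod 2)).mulVec z (Sum.inl r)
          = G.mulVec (fun j => if P j then z j else 0) r := by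
      intro z r
      simp only [Matrix.mulVec, dotProduct, Matrix.map_apply]
      simp only [hAz]
      refine Finset.sum_congr rfl fun j _ => ?_
      rw [apply_ite (Int.cast : ℤ → ZMod 2)]
      by_cases hj : P j
      · simp only [hj, if_true]
        rw [apply_ite (Int.cast : ℤ → ZMod 2)]
        by_cases hg : G r j = 0
        · simp [hg]
        · rw [zmod2_ne_zero _ hg]; simp
      · simp [hj]
    have rowr : ∀ (z : Fin n → ZMod 2) i,
        (Az.map (Int.cast : ℤ → ZMod 2)).mulVec z (Sum.inr i)
          = if P i then 0 else z i := by
      intro z i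
      simp only [Matrix.mulVec, dotProduct, Matrix.map_apply]
      simp only [hAz]
      have : ∀ j, ((Int.cast (if i = j ∧ ¬ P j then (1:ℤ) else 0) : ZMod 2)) * z j
          = if i = j then (if P j then 0 else z j) else 0 := by
        intro j
        by_cases h1 : i = j <;> by_cases h2 : P j <;> simp [h1, h2]
      rw [Finset.sum_congr rfl fun j _ => this j]
      simp
    -- outside S, x = y
    have hout : ∀ i, ¬ P i → x i = y i := by
      intro i hi
      have := congrFun hxy (Sum.inr i)
      rw [rowr, rowr] at this
      simpa [hi] using this
    -- inside S: G x' = G y'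
    have hGxy : G.mulVec x' = G.mulVec y' := by
      funext r
      have := congrFun hxy (Sum.inl r)
      rw [rowl, rowl] at this
      exact this
    set u : Fin n → ZMod 2 := x' + y' with hu
    have hGu : G.mulVec u = 0 := by
      rw [hu, Matrix.mulVec_add, hGxy]
      funext r; exact zmod2_add_self _
    set u₁ : Fin n → ZMod 2 := fun j => if q₁ j ≠ 0 then u j else 0 with hu₁
    set u₂ : Fin n → ZMod 2 := fun j => if q₁ j = 0 then u j else 0 with hu₂
    have huu : u = u₁ + u₂ := by
      funext j; by_cases h : q₁ j = 0 <;> simp [hu₁, hu₂, h]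
    have hm₁ : u₁ ∈ Qs := by
      refine hdown _ hq₁ u₁ fun j hj => ?_
      simp only [Set.mem_setOf_eq, hu₁] at hj ⊢
      by_cases h : q₁ j = 0
      · simp [h] at hj
      · simp [suppVec, h]
    have hm₂ : u₂ ∈ Qs := by
      refine hdown _ hq₂ u₂ fun j hj => ?_
      simp only [Set.mem_setOf_eq, hu₂] at hj ⊢
      by_cases h : q₁ j = 0
      · simp only [h, if_true] at hj
        have hPj : P j := by
          by_contra hp
          have : u j = 0 := by
            simp [hu, hx', hy', hp]
          exact hj this
        have hq2j : q₂ j ≠ 0 := hPj.resolve_left (by simpa using h)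
        simp [suppVec, hq2j]
      · simp [h] at hj
    have hGu₁₂ : G.mulVec u₁ = G.mulVec u₂ := by
      have h0 : G.mulVec u₁ + G.mulVec u₂ = 0 := by
        rw [← Matrix.mulVec_add, ← huu, hGu]
      funext r
      exact zmod2_add_eq_zero _ _ (congrFun h0 r)
    have heq := hinj u₁ hm₁ u₂ hm₂ hGu₁₂
    have hu0 : u = 0 := by
      funext j
      by_cases h : q₁ j = 0
      · have h1 : u₁ j = 0 := by simp [hu₁, h]
        have h2 : u₂ j = u j := by simp [hu₂, h]
        have := congrFun heq j
        rw [h1, h2] at this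
        simpa using this.symm
      · have h1 : u₁ j = u j := by simp [hu₁, h]
        have h2 : u₂ j = 0 := by simp [hu₂, h]
        have := congrFun heq j
        rw [h1, h2] at this
        simpa using this
    have hx'y' : x' = y' := by
      funext j
      exact zmod2_add_eq_zero _ _ (congrFun hu0 j)
    funext j
    by_cases hj : P j
    · have := congrFun hx'y' j
      simpa [hx', hy', hj] using this
    · exact hout j hj
  -- ℂ injectivity via keyLemma
  have hinjC := keyLemma Az hinj2
  have rowlC : ∀ (z : Fin n → ℂ), (∀ j, ¬ P j → z j = 0) → ∀ r,
      (Az.map (Int.cast : ℤ → ℂ)).mulVec z (Sum.inl r) = (G.map liftC).mulVec z r := by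
    intro z hz r
    simp only [Matrix.mulVec, dotProduct, Matrix.map_apply]
    simp only [hAz]
    refine Finset.sum_congr rfl fun j _ => ?_
    rw [apply_ite (Int.cast : ℤ → ℂ)]
    by_cases hj : P j
    · simp only [hj, if_true, liftC]
      rw [apply_ite (Int.cast : ℤ → ℂ)]
      by_cases hg : G r j = 0 <;> simp [hg]
    · simp [hj, hz j hj]
  have rowrC : ∀ (z : Fin n → ℂ), (∀ j, ¬ P j → z j = 0) → ∀ i,
      (Az.map (Int.cast : ℤ → ℂ)).mulVec z (Sum.inr i) = 0 := by
    intro z hz i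
    simp only [Matrix.mulVec, dotProduct, Matrix.map_apply]
    simp only [hAz]
    refine Finset.sum_eq_zero fun j _ => ?_
    rw [apply_ite (Int.cast : ℤ → ℂ)]
    by_cases h1 : i = j <;> by_cases h2 : P j
    · simp [h1, h2]
    · simp [h1, h2, hz j h2]
    · simp [h1, h2]
    · simp [h1, h2]
  have hz1 : ∀ j, ¬ P j → q₁ j = 0 := fun j hj => by
    by_contra h; exact hj (Or.inl h)
  have hz2 : ∀ j, ¬ P j → q₂ j = 0 := fun j hj => by
    by_contra h; exact hj (Or.inr h)
  apply hinjC
  simp only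
  funext r
  cases r with
  | inl r => rw [rowlC q₁ hz1, rowlC q₂ hz2, hMeas]
  | inr i => rw [rowrC q₁ hz1, rowrC q₂ hz2]
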